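/- Let φ_{d,γ} denote the density of the d-dimensional centered Gaussian with covariance γ·I. There exists a constant C < ∞ (depending only on d) such that for all 0 < γ̃ ≤ γ and all z ∈ ℝ^d: |φ_{d,γ}(z) − φ_{d,γ̃}(z)| ≤ C · (γ/γ̃)^{d/2} · ((γ − γ̃)/γ̃) · (1 + ‖z‖²/γ) · φ_{d,γ}(z). -/

import Mathlib

open Real

/-- Density of the `d`-dimensional centered Gaussian distribution with covariance `γ • I`. -/
noncomputable def gaussDensity (d : ℕ) (γ : ℝ) (z : EuclideanSpace ℝ (Fin d)) : ℝ :=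
  (2 * π * γ) ^ (-(d : ℝ) / 2) * Real.exp (-‖z‖ ^ 2 / (2 * γ))

set_option maxHeartbeats 1600000 in
theorem stmt4 (d : ℕ) :
    ∃ C : ℝ, ∀ γ γt : ℝ, 0 < γt → γt ≤ γ → ∀ z : EuclideanSpace ℝ (Fin d),
      |gaussDensity d γ z - gaussDensity d γt z| ≤
        C * (γ / γt) ^ ((d : ℝ) / 2) * ((γ - γt) / γt) * (1 + ‖z‖ ^ 2 / γ) *
          gaussDensity d γ z := by
  refine ⟨(d : ℝ) / 2 + 1, ?_⟩
  intro γ γt hγt hle z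
  have hγ : 0 < γ := lt_of_lt_of_le hγt hle
  have hπ : 0 < π := Real.pi_pos
  set r : ℝ := ‖z‖ ^ 2 with hrdef
  have hr0 : 0 ≤ r := by positivity
  set a : ℝ := (d : ℝ) / 2 with hadef
  have ha0 : 0 ≤ a := by positivity
  have hx1 : (1:ℝ) ≤ γ / γt := (one_le_div hγt).2 hle
  have hx0 : 0 < γ / γt := by positivity
  set R : ℝ := (γ / γt) ^ a with hRdef
  have hR1 : 1 ≤ R := Real.one_le_rpow hx1 ha0
  have hR0 : 0 < R := lt_of_lt_of_le one_pos hR1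
  set s : ℝ := r / (2 * γt) - r / (2 * γ) with hsdef
  have hs0 : 0 ≤ s := by
    have : r / (2 * γ) ≤ r / (2 * γt) := by
      apply div_le_div_of_nonneg_left hr0 (by positivity) (by linarith)
    simp only [hsdef]; linarith
  set E : ℝ := Real.exp (-s) with hEdef
  have hE0 : 0 < E := Real.exp_pos _
  have hE1 : E ≤ 1 := Real.exp_le_one_iff.2 (by linarith)
  set δ : ℝ := (γ - γt) / γt with hδdef
  have hδ0 : 0 ≤ δ := by
    apply div_nonneg (by linarith) (le_of_lt hγt)
  have hφpos : 0 < gaussDensity d γ z := by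
    unfold gaussDensity
    positivity
  -- factorization
  have hfac : gaussDensity d γt z = R * E * gaussDensity d γ z := by
    unfold gaussDensity
    have h1 : (2 * π * γt) = (2 * π * γ) * (γ / γt)⁻¹ := by
      field_simp
    rw [h1, Real.mul_rpow (by positivity) (by positivity)]
    have h2 : ((γ / γt)⁻¹ : ℝ) ^ (-(d:ℝ)/2) = R := by
      rw [Real.inv_rpow (le_of_lt hx0)]
      rw [show (-(d:ℝ)/2) = -a by rw [hadef]; ring]
      rw [Real.rpow_neg (le_of_lt hx0), inv_inv]
    have h3 : Real.exp (-r / (2 * γt)) = E * Real.exp (-r / (2 * γ)) := by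
      rw [hEdef, ← Real.exp_add]
      congr 1
      rw [hsdef]
      field_simp
      ring
    rw [h2, h3]
    ring
  -- key facts
  have hsval : s = (1/2) * (r / γ) * δ := by
    rw [hsdef, hδdef]
    field_simp
  have h1mE : 1 - E ≤ s := by
    have := Real.add_one_le_exp (-s)
    rw [← hEdef] at this
    linarith
  have hlog : Real.log (γ / γt) ≤ δ := by
    have := Real.log_le_sub_one_of_pos hx0
    have hδeq : γ / γt - 1 = δ := by rw [hδdef]; field_simp
    linarith
  have hlog0 : 0 ≤ Real.log (γ / γt) := Real.log_nonneg hx1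
  have hRexp : R = Real.exp (a * Real.log (γ / γt)) := by
    rw [hRdef, Real.rpow_def_of_pos hx0]
    ring_nf
  have hRm1 : R - 1 ≤ a * R * δ := by
    have hinv : 1 - R⁻¹ ≤ a * Real.log (γ / γt) := by
      have hRinv : R⁻¹ = Real.exp (-(a * Real.log (γ / γt))) := by
        rw [hRexp, ← Real.exp_neg]
      have := Real.add_one_le_exp (-(a * Real.log (γ / γt)))
      rw [← hRinv] at this
      linarith
    have hiq : 1 - R⁻¹ ≤ a * δ := by
      have : a * Real.log (γ / γt) ≤ a * δ := mul_le_mul_of_nonneg_left hlog ha0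
      linarith
    have : R * (1 - R⁻¹) ≤ R * (a * δ) := mul_le_mul_of_nonneg_left hiq (le_of_lt hR0)
    have hRR : R * (1 - R⁻¹) = R - 1 := by field_simp
    nlinarith
  clear_value R E s a δ r
  -- the central bound
  have hkey : |1 - R * E| ≤ (a + 1) * R * δ * (1 + r / γ) := by
    have hrγ0 : 0 ≤ r / γ := by positivity
    rcases le_or_gt (R * E) 1 with h | h
    · rw [abs_of_nonneg (by linarith)]
      have hEle : E ≤ R * E := le_mul_of_one_le_left (le_of_lt hE0) hR1
      have h1 : 1 - R * E ≤ 1 - E := by linarith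
      have h2 : 1 - E ≤ (1/2) * (r / γ) * δ := by rw [← hsval]; exact h1mE
      nlinarith [mul_nonneg hδ0 hrγ0, mul_nonneg (mul_nonneg hδ0 hrγ0) (sub_nonneg.2 hR1)]
    · rw [abs_of_neg (by linarith)]
      have hREle : R * E ≤ R := mul_le_of_le_one_right hR0.le hE1
      have : R * E - 1 ≤ a * R * δ := by linarith
      nlinarith [mul_nonneg (mul_nonneg (mul_nonneg ha0 (le_of_lt hR0)) hδ0) hrγ0,
        mul_nonneg hδ0 hrγ0, mul_nonneg (mul_nonneg hδ0 hrγ0) (le_of_lt hR0)]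
  have heq : gaussDensity d γ z - gaussDensity d γt z = (1 - R * E) * gaussDensity d γ z := by
    rw [hfac]; ring
  rw [heq, abs_mul, abs_of_pos hφpos]
  exact mul_le_mul_of_nonneg_right hkey hφpos.le
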